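/- Fix d ∈ ℕ, α ∈ (0, 1/4], n ∈ ℕ, m ∈ [n], τ ∈ ℝ, σ, γ, λ > 0 and θ > 1, and write P' := P_Mon,d(σ) ∩ P_Reg,d(τ, θ, γ, λ). There exists c ∈ (0,1), depending only on d, such that sup over P ∈ P' of the inf over Â ∈ Â^U_{n,m}(τ, α, P') of E_P μ(X_τ(η) \ Â(D)) is at least c · m^{−1/d}, where μ and η denote the covariate marginal and regression function of P and D ∼ P^n. -/

import Mathlib

open MeasureTheory ProbabilityTheory Real Set
open scoped ENNReal Classical

noncomputable section

/-- `log_+ x := log (x ∨ e)`. -/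
def logp (x : ℝ) : ℝ := Real.log (max x (Real.exp 1))

/-- The σ-algebra generated by the covariate `X = Prod.fst`. -/
def mX (d : ℕ) : MeasurableSpace ((Fin d → ℝ) × ℝ) :=
  MeasurableSpace.comap Prod.fst inferInstance

/-- `η` is (a version of) the regression function `x ↦ E[Y | X = x]` of `P`. -/
def IsRegFn (d : ℕ) (P : Measure ((Fin d → ℝ) × ℝ)) (η : (Fin d → ℝ) → ℝ) : Prop :=
  Measurable η ∧ (fun p => η p.1) =ᵐ[P] P[fun p => p.2 | mX d]

/-- Conditionally on `X`, `Y - η X` is sub-Gaussian with variance parameter `σ²`. -/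
def CondSubG (d : ℕ) (σ : ℝ) (P : Measure ((Fin d → ℝ) × ℝ)) (η : (Fin d → ℝ) → ℝ) : Prop :=
  ∀ t : ℝ, Integrable (fun p => Real.exp (t * (p.2 - η p.1))) P ∧
    (P[fun p => Real.exp (t * (p.2 - η p.1)) | mX d])
      ≤ᵐ[P] fun _ => Real.exp (σ ^ 2 * t ^ 2 / 2)

/-- The class `P_{Mon,d}(σ)`, as a predicate on the pair `(P, η)`. -/
def PMon (d : ℕ) (σ : ℝ) (P : Measure ((Fin d → ℝ) × ℝ)) (η : (Fin d → ℝ) → ℝ) : Prop :=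
  IsProbabilityMeasure P ∧ IsRegFn d P η ∧ Monotone η ∧ CondSubG d σ P η

/-- The margin class `P_{Mar,d}(τ, β, ν)`, as a predicate on the pair `(P, η)`. -/
def PMar (d : ℕ) (τ β ν : ℝ) (P : Measure ((Fin d → ℝ) × ℝ)) (η : (Fin d → ℝ) → ℝ) : Prop :=
  IsProbabilityMeasure P ∧ IsRegFn d P η ∧
    ∀ ξ : ℝ, ξ ∈ Set.Ioc (0 : ℝ) 1 →
      (P.map Prod.fst) (η ⁻¹' Set.Icc τ (τ + ν * ξ ^ β)) ≤ ENNReal.ofReal ξ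

/-- Support of a Borel measure: the points all of whose open neighbourhoods have
positive measure. -/
def measSupport {α : Type*} [TopologicalSpace α] [MeasurableSpace α] (μ : Measure α) : Set α :=
  {x | ∀ U : Set α, IsOpen U → x ∈ U → 0 < μ U}

/-- The regularity class `P_{Reg,d}(τ, θ, γ, λ)`, as a predicate on the pair `(P, η)`. -/
def PReg (d : ℕ) (τ θ γ lam : ℝ) (P : Measure ((Fin d → ℝ) × ℝ)) (η : (Fin d → ℝ) → ℝ) : Prop :=
  IsProbabilityMeasure P ∧ IsRegFn d P η ∧
    ∀ x ∈ {x | τ ≤ η x} ∩ measSupport (P.map Prod.fst), ∀ r : ℝ, r ∈ Set.Ioc (0:ℝ) 1 →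
      (ENNReal.ofReal (θ⁻¹ * r ^ d) ≤ (P.map Prod.fst) (Metric.closedBall x r) ∧
        (P.map Prod.fst) (Metric.closedBall x r) ≤ ENNReal.ofReal (θ * (2 * r) ^ d)) ∧
      (Metric.closedBall x r ∩ {z | τ + lam * r ^ γ ≤ η z}).Nonempty

/-- Indices `i` with `X i ≼ x`, ordered by increasing sup-norm distance to `x`,
ties broken by the original index ordering. -/
def nnOrder {d n : ℕ} (X : Fin n → (Fin d → ℝ)) (x : Fin d → ℝ) : List (Fin n) :=
  List.insertionSort
    (fun i j => ‖X i - x‖ < ‖X j - x‖ ∨ (‖X i - x‖ = ‖X j - x‖ ∧ i ≤ j))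
    ((List.finRange n).filter (fun i => decide (X i ≤ x)))

/-- The martingale sums `S_k = ∑_{j=1}^k (Y_{(j)}(x) - τ)/σ`. -/
def Smart {d n : ℕ} (σ τ : ℝ) (D : Fin n → (Fin d → ℝ) × ℝ) (x : Fin d → ℝ) (k : ℕ) : ℝ :=
  ((((nnOrder (fun i => (D i).1) x).take k).map (fun i => ((D i).2 - τ) / σ)).sum)

/-- The anytime-valid martingale p-value `p̂_{σ,τ}(x, D)`. -/
def phat {d n : ℕ} (σ τ : ℝ) (D : Fin n → (Fin d → ℝ) × ℝ) (x : Fin d → ℝ) : ℝ :=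
  ((List.range (nnOrder (fun i => (D i).1) x).length).map (fun k =>
      5.2 * Real.exp (-(max (Smart σ τ D x (k + 1)) 0) ^ 2 / (2.0808 * (k + 1))
        + Real.log (Real.log (2 * (k + 1))) / 0.72))).foldr min 1

/-- One iteration of the DAG testing procedure `R^ISS`. Edges point from parents to children:
`E a b` means `a` is a parent of `b`; `F` is the weight-one (polyforest) subrelation. -/
def RISSstep {I : Type*} [Fintype I] (E F : I → I → Prop) (α : ℝ) (p : I → ℝ)
    (R : Finset I) : Finset I :=
  let SL : Finset I := Finset.univ.filter (fun i => (∀ j, ¬ F i j) ∧ i ∉ R)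
  let SC : Finset I := Finset.univ.filter (fun i => i ∉ R ∧ ∀ j, F j i → j ∈ R)
  let budget : I → ℝ := fun i =>
    if i ∈ SC then
      ((SL.filter (fun j => j = i ∨ Relation.TransGen F i j)).card : ℝ) * α / (SL.card : ℝ)
    else 0
  let Il : Finset I := Finset.univ.filter (fun i => p i ≤ budget i)
  if Il = ∅ then R
  else R ∪ Il ∪ Finset.univ.filter (fun i => ∃ j ∈ Il, Relation.TransGen E i j)

/-- The DAG testing procedure `R^ISS_α` applied to a polyforest-weighted DAG `(I, E, w)`
(represented by the edge relation `E` and the weight-one subrelation `F`) and p-values `p`. -/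
def RISS {I : Type*} [Fintype I] (E F : I → I → Prop) (α : ℝ) (p : I → ℝ) : Finset I :=
  (RISSstep E F α p)^[Fintype.card I] ∅

/-- Edge relation of the DAG induced by the covariate points `z`. -/
def indE {d m : ℕ} (z : Fin m → (Fin d → ℝ)) (i0 i1 : Fin m) : Prop :=
  i0 ≠ i1 ∧ z i1 ≤ z i0 ∧ ∀ i2, z i1 ≤ z i2 → z i2 ≤ z i0 →
    (z i2 = z i0 ∧ i0 ≤ i2) ∨ (z i2 = z i1 ∧ i2 ≤ i1)

/-- Edge relation of the induced polyforest: among the induced-DAG parents of `i1`, keep the one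
of minimal sup-norm distance to `z i1`, ties broken by smallest index. -/
def indF {d m : ℕ} (z : Fin m → (Fin d → ℝ)) (i0 i1 : Fin m) : Prop :=
  indE z i0 i1 ∧ ∀ i, indE z i i1 →
    (‖z i0 - z i1‖ < ‖z i - z i1‖ ∨ (‖z i0 - z i1‖ = ‖z i - z i1‖ ∧ i0 ≤ i))

/-- The selection set `Â^{ISS}_{σ,τ,α,m}(D)`: the upper hull of the covariate points (among the
first `m` data points) whose hypotheses are rejected by `R^ISS` applied to the induced
polyforest-weighted DAG of `(X_1, …, X_m)` and the martingale p-values `p̂_{σ,τ}(X_i, D)`. -/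
def AISS {d n : ℕ} (σ τ α : ℝ) (m : ℕ) (hm : m ≤ n)
    (D : Fin n → (Fin d → ℝ) × ℝ) : Set (Fin d → ℝ) :=
  let z : Fin m → (Fin d → ℝ) := fun i => (D (Fin.castLE hm i)).1
  {x | ∃ i ∈ RISS (indE z) (indF z) α (fun i => phat σ τ D (z i)), z i ≤ x}

/-- `A` is a valid data-dependent selection set at level `α` for the class `PC`:
it is jointly measurable and satisfies the Type I error guarantee over `PC`. -/
def SelValid (d n : ℕ) (τ α : ℝ)
    (PC : Measure ((Fin d → ℝ) × ℝ) → ((Fin d → ℝ) → ℝ) → Prop)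
    (A : (Fin n → (Fin d → ℝ) × ℝ) → Set (Fin d → ℝ)) : Prop :=
  MeasurableSet {q : (Fin n → (Fin d → ℝ) × ℝ) × (Fin d → ℝ) | q.2 ∈ A q.1} ∧
  ∀ P η, PC P η →
    ENNReal.ofReal (1 - α) ≤ (Measure.pi fun _ : Fin n => P) {ω | A ω ⊆ {x | τ ≤ η x}}

end

/-- `A` almost surely outputs the upper hull of a subset of the first `m` covariate points,
for data drawn from any distribution in the class `PC`. -/
def SelUpperHull (d n m : ℕ)
    (PC : Measure ((Fin d → ℝ) × ℝ) → ((Fin d → ℝ) → ℝ) → Prop)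
    (A : (Fin n → (Fin d → ℝ) × ℝ) → Set (Fin d → ℝ)) : Prop :=
  ∀ P η, PC P η →
    ∀ᵐ ω ∂(Measure.pi fun _ : Fin n => P),
      ∃ J : Finset (Fin n), (∀ i ∈ J, (i : ℕ) < m) ∧
        A ω = {x | ∃ i ∈ J, (ω i).1 ≤ x}

noncomputable section
namespace Prop14
open MeasureTheory Set
open scoped ENNReal Classical

def cube (d : ℕ) : Set (Fin d → ℝ) := Set.pi univ fun _ => Icc (0:ℝ) 1

def mu0 (d : ℕ) : Measure (Fin d → ℝ) := volume.restrict (cube d)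

lemma measurableSet_cube (d : ℕ) : MeasurableSet (cube d) :=
  MeasurableSet.univ_pi fun _ => measurableSet_Icc

lemma isClosed_cube (d : ℕ) : IsClosed (cube d) :=
  isClosed_set_pi fun _ _ => isClosed_Icc

lemma volume_cube (d : ℕ) : volume (cube d) = 1 := by
  rw [cube, volume_pi_pi]; simp

instance (d : ℕ) : IsProbabilityMeasure (mu0 d) :=
  ⟨by rw [mu0, Measure.restrict_apply_univ, volume_cube]⟩

def sgnpow (γ t : ℝ) : ℝ := if 0 ≤ t then t ^ γ else -((-t) ^ γ)

def gclamp (γ t : ℝ) : ℝ := max (min (sgnpow γ t) 1) (-1)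

lemma sgnpow_mono (γ : ℝ) (hγ : 0 < γ) : Monotone (sgnpow γ) := by
  intro u v huv
  unfold sgnpow
  rcases le_or_gt 0 u with hu | hu
  · rw [if_pos hu, if_pos (hu.trans huv)]
    exact Real.rpow_le_rpow hu huv hγ.le
  · rw [if_neg (not_le.mpr hu)]
    rcases le_or_gt 0 v with hv | hv
    · rw [if_pos hv]
      have h1 : -(-u) ^ γ ≤ 0 := neg_nonpos.mpr (Real.rpow_nonneg (by linarith) γ)
      exact h1.trans (Real.rpow_nonneg hv γ)
    · rw [if_neg (not_le.mpr hv)]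
      have := Real.rpow_le_rpow (by linarith : (0:ℝ) ≤ -v) (by linarith : -v ≤ -u) hγ.le
      linarith
  
lemma gclamp_mono (γ : ℝ) (hγ : 0 < γ) : Monotone (gclamp γ) := fun u v huv =>
  max_le_max (min_le_min (sgnpow_mono γ hγ huv) le_rfl) le_rfl

lemma gclamp_nonneg_iff (γ : ℝ) (hγ : 0 < γ) (t : ℝ) : 0 ≤ gclamp γ t ↔ 0 ≤ t := by
  unfold gclamp sgnpow
  constructor
  · intro h
    by_contra ht
    push_neg at ht
    rw [if_neg (not_le.mpr ht)] at h
    have hpos : 0 < (-t) ^ γ := Real.rpow_pos_of_pos (by linarith) γ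
    have : max (min (-(-t) ^ γ) 1) (-1) < 0 := by
      rcases le_or_gt (-(-t)^γ) (-1) with h1 | h1
      · rw [min_comm]
        have : min 1 (-(-t)^γ) = -(-t)^γ := min_eq_right (by linarith)
        rw [this, max_eq_right h1]; norm_num
      · have : min (-(-t)^γ) 1 = -(-t)^γ := min_eq_left (by linarith)
        rw [this, max_eq_left h1.le]; linarith
    linarith
  · intro ht
    rw [if_pos ht]
    have h0 : (0:ℝ) ≤ t ^ γ := Real.rpow_nonneg ht γ
    have : (0:ℝ) ≤ min (t ^ γ) 1 := le_min h0 one_pos.le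
    exact le_max_of_le_left this

lemma abs_gclamp_le (γ t : ℝ) : |gclamp γ t| ≤ 1 := by
  rw [abs_le]
  constructor
  · exact le_max_right _ _
  · exact max_le (min_le_right _ _) (by norm_num)

lemma gclamp_ge_rpow (γ : ℝ) (hγ : 0 < γ) {r t : ℝ} (hr0 : 0 < r) (hr1 : r ≤ 1) (hrt : r ≤ t) :
    r ^ γ ≤ gclamp γ t := by
  have ht : 0 ≤ t := hr0.le.trans hrt
  have h1 : r ^ γ ≤ t ^ γ := Real.rpow_le_rpow hr0.le hrt hγ.le
  have h2 : r ^ γ ≤ 1 := Real.rpow_le_one hr0.le hr1 hγ.le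
  unfold gclamp sgnpow
  rw [if_pos ht]
  exact le_max_of_le_left (le_min h1 h2)



def aconst (d : ℕ) : ℝ := ((d:ℝ) - 1) * (1/4 + 1/(2*d))

def etaF (d : ℕ) (τ lam γ : ℝ) : (Fin d → ℝ) → ℝ :=
  fun x => τ + lam * gclamp γ ((∑ i, x i) - aconst d)

lemma etaF_meas (d : ℕ) (τ lam γ : ℝ) (hγ : 0 < γ) : Measurable (etaF d τ lam γ) := by
  apply Measurable.add measurable_const
  apply Measurable.mul measurable_const
  have hsum : Measurable (fun x : Fin d → ℝ => (∑ i, x i) - aconst d) :=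
    (Finset.measurable_sum Finset.univ fun i _ => measurable_pi_apply i).sub measurable_const
  have hg : Measurable (gclamp γ) := by
    have : Measurable (sgnpow γ) := by
      unfold sgnpow
      apply Measurable.ite (measurableSet_le measurable_const measurable_id)
      · exact (Real.continuous_rpow_const hγ.le).measurable
      · exact (((Real.continuous_rpow_const hγ.le).comp continuous_neg).measurable).neg
    exact (this.min measurable_const).max measurable_const
  exact hg.comp hsum

lemma etaF_mono (d : ℕ) (τ lam γ : ℝ) (hlam : 0 < lam) (hγ : 0 < γ) :
    Monotone (etaF d τ lam γ) := by
  intro x y hxy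
  unfold etaF
  have hsum : (∑ i, x i) ≤ ∑ i, y i := Finset.sum_le_sum fun i _ => hxy i
  have := gclamp_mono γ hγ (by linarith : (∑ i, x i) - aconst d ≤ (∑ i, y i) - aconst d)
  nlinarith

lemma etaF_superlevel (d : ℕ) (τ lam γ : ℝ) (hlam : 0 < lam) (hγ : 0 < γ) :
    {x | τ ≤ etaF d τ lam γ x} = {x : Fin d → ℝ | aconst d ≤ ∑ i, x i} := by
  ext x
  simp only [mem_setOf_eq, etaF]
  rw [show (τ ≤ τ + lam * gclamp γ ((∑ i, x i) - aconst d)) ↔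
      0 ≤ lam * gclamp γ ((∑ i, x i) - aconst d) by constructor <;> intro <;> linarith]
  rw [mul_nonneg_iff_of_pos_left hlam, gclamp_nonneg_iff γ hγ]
  constructor <;> intro <;> linarith

def Pdist (d : ℕ) (τ lam γ : ℝ) : Measure ((Fin d → ℝ) × ℝ) :=
  (mu0 d).map (fun x => (x, etaF d τ lam γ x))

lemma graph_meas (d : ℕ) (τ lam γ : ℝ) (hγ : 0 < γ) :
    Measurable (fun x : Fin d → ℝ => (x, etaF d τ lam γ x)) :=
  measurable_id.prodMk (etaF_meas d τ lam γ hγ)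

lemma isProb_Pdist (d : ℕ) (τ lam γ : ℝ) (hγ : 0 < γ) : IsProbabilityMeasure (Pdist d τ lam γ) := by
  rw [Pdist]
  exact Measure.isProbabilityMeasure_map (graph_meas d τ lam γ hγ).aemeasurable

lemma Pdist_fst (d : ℕ) (τ lam γ : ℝ) (hγ : 0 < γ) :
    (Pdist d τ lam γ).map Prod.fst = mu0 d := by
  rw [Pdist, Measure.map_map measurable_fst (graph_meas d τ lam γ hγ)]
  have : (Prod.fst ∘ fun x : Fin d → ℝ => (x, etaF d τ lam γ x)) = id := rfl
  rw [this, Measure.map_id]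

lemma Pdist_graph_ae (d : ℕ) (τ lam γ : ℝ) (hγ : 0 < γ) :
    (fun p : (Fin d → ℝ) × ℝ => p.2) =ᵐ[Pdist d τ lam γ] fun p => etaF d τ lam γ p.1 := by
  have hms : MeasurableSet {a : (Fin d → ℝ) × ℝ | ¬ a.2 = etaF d τ lam γ a.1} :=
    (measurableSet_eq_fun measurable_snd ((etaF_meas d τ lam γ hγ).comp measurable_fst)).compl
  rw [Filter.EventuallyEq, ae_iff, Pdist, Measure.map_apply (graph_meas d τ lam γ hγ) hms]
  have h : ((fun x : Fin d → ℝ => (x, etaF d τ lam γ x)) ⁻¹'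
      {a | ¬a.2 = etaF d τ lam γ a.1}) = ∅ := by
    ext x; simp
  rw [h, measure_empty]

lemma mX_le (d : ℕ) : mX d ≤ (inferInstance : MeasurableSpace ((Fin d → ℝ) × ℝ)) :=
  measurable_fst.comap_le

lemma etaF_bound (d : ℕ) (τ lam γ : ℝ) (hlam : 0 < lam) (x : Fin d → ℝ) :
    |etaF d τ lam γ x| ≤ |τ| + lam := by
  unfold etaF
  have := abs_gclamp_le γ ((∑ i, x i) - aconst d)
  calc |τ + lam * gclamp γ ((∑ i, x i) - aconst d)|
      ≤ |τ| + |lam * gclamp γ ((∑ i, x i) - aconst d)| := abs_add_le _ _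
    _ ≤ |τ| + lam := by
        rw [abs_mul, abs_of_pos hlam]
        nlinarith [abs_nonneg (gclamp γ ((∑ i, x i) - aconst d))]

lemma isRegFn_Pdist (d : ℕ) (τ lam γ : ℝ) (hlam : 0 < lam) (hγ : 0 < γ) :
    IsRegFn d (Pdist d τ lam γ) (etaF d τ lam γ) := by
  haveI := isProb_Pdist d τ lam γ hγ
  refine ⟨etaF_meas d τ lam γ hγ, ?_⟩
  have hmle := mX_le d
  have hsm : StronglyMeasurable[mX d] (fun p : (Fin d → ℝ) × ℝ => etaF d τ lam γ p.1) := by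
    have hfst : Measurable[mX d] (Prod.fst : (Fin d → ℝ) × ℝ → (Fin d → ℝ)) := by
      rw [mX]
      exact Measurable.of_comap_le le_rfl
    exact ((etaF_meas d τ lam γ hγ).comp hfst).stronglyMeasurable
  have hint : Integrable (fun p : (Fin d → ℝ) × ℝ => etaF d τ lam γ p.1) (Pdist d τ lam γ) := by
    refine Integrable.mono' (integrable_const (|τ| + lam))
      ((etaF_meas d τ lam γ hγ).comp measurable_fst).aestronglyMeasurable ?_
    exact Filter.Eventually.of_forall fun p => etaF_bound d τ lam γ hlam p.1
  have h1 := condExp_congr_ae (m := mX d) (μ := Pdist d τ lam γ) (Pdist_graph_ae d τ lam γ hγ)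
  have h2 : (Pdist d τ lam γ)[(fun p => etaF d τ lam γ p.1)|mX d]
      = fun p => etaF d τ lam γ p.1 := condExp_of_stronglyMeasurable hmle hsm hint
  rw [h2] at h1
  exact h1.symm

lemma condSubG_Pdist (d : ℕ) (σ τ lam γ : ℝ) (hσ : 0 < σ) (hγ : 0 < γ) :
    CondSubG d σ (Pdist d τ lam γ) (etaF d τ lam γ) := by
  haveI := isProb_Pdist d τ lam γ hγ
  intro t
  have hae : (fun p : (Fin d → ℝ) × ℝ => Real.exp (t * (p.2 - etaF d τ lam γ p.1)))
      =ᵐ[Pdist d τ lam γ] fun _ => (1:ℝ) := by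
    filter_upwards [Pdist_graph_ae d τ lam γ hγ] with p hp
    rw [hp]
    simp
  constructor
  · exact (integrable_const (1:ℝ)).congr hae.symm
  · have h1 := condExp_congr_ae (m := mX d) (μ := Pdist d τ lam γ) hae
    rw [condExp_const (mX_le d)] at h1
    filter_upwards [h1] with p hp
    rw [hp]
    exact Real.one_le_exp (by positivity)

lemma pmon_Pdist (d : ℕ) (σ τ lam γ : ℝ) (hσ : 0 < σ) (hlam : 0 < lam) (hγ : 0 < γ) :
    PMon d σ (Pdist d τ lam γ) (etaF d τ lam γ) :=
  ⟨isProb_Pdist d τ lam γ hγ, isRegFn_Pdist d τ lam γ hlam hγ, etaF_mono d τ lam γ hlam hγ,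
    condSubG_Pdist d σ τ lam γ hσ hγ⟩



lemma measSupport_subset_cube (d : ℕ) : measSupport (mu0 d) ⊆ cube d := by
  intro x hx
  by_contra hxc
  have h := hx (cube d)ᶜ (isClosed_cube d).isOpen_compl hxc
  rw [mu0, Measure.restrict_apply (measurableSet_cube d).compl, compl_inter_self] at h
  simp at h

lemma mu0_closedBall (d : ℕ) (x : Fin d → ℝ) (hx : x ∈ cube d) {r : ℝ}
    (hr0 : 0 < r) (hr1 : r ≤ 1) :
    ENNReal.ofReal (r ^ d) ≤ mu0 d (Metric.closedBall x r) ∧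
      mu0 d (Metric.closedBall x r) ≤ ENNReal.ofReal ((2 * r) ^ d) := by
  have hball : Metric.closedBall x r = Set.pi univ fun i => Icc (x i - r) (x i + r) := by
    rw [closedBall_pi x hr0.le]
    simp only [Real.closedBall_eq_Icc]
  have hmeas : mu0 d (Metric.closedBall x r)
      = ∏ i, ENNReal.ofReal (min (x i + r) 1 - max (x i - r) 0) := by
    rw [mu0, Measure.restrict_apply' (measurableSet_cube d), hball, cube,
      ← Set.pi_inter_distrib, volume_pi_pi]
    congr 1
    ext i
    rw [Set.Icc_inter_Icc, Real.volume_Icc]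
  have hxi : ∀ i, 0 ≤ x i ∧ x i ≤ 1 := fun i => by
    have := hx i (mem_univ i); exact ⟨this.1, this.2⟩
  have hlen : ∀ i, r ≤ min (x i + r) 1 - max (x i - r) 0 ∧
      min (x i + r) 1 - max (x i - r) 0 ≤ 2 * r := by
    intro i
    obtain ⟨h0, h1⟩ := hxi i
    constructor
    · rcases le_or_gt (x i + r) 1 with h | h
      · rw [min_eq_left h]
        have : max (x i - r) 0 ≤ x i := max_le (by linarith) h0
        linarith
      · rw [min_eq_right h.le]
        have : max (x i - r) 0 ≤ 1 - r := max_le (by linarith) (by linarith)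
        linarith
    · have hh1 : min (x i + r) 1 ≤ x i + r := min_le_left _ _
      have hh2 : x i - r ≤ max (x i - r) 0 := le_max_left _ _
      linarith
  have hpr : ∀ c : ℝ≥0∞, (∏ _i : Fin d, c) = c ^ d := fun c => by
    rw [Finset.prod_const, Finset.card_univ, Fintype.card_fin]
  rw [hmeas]
  constructor
  · have h1 : ENNReal.ofReal (r ^ d) = ∏ _i : Fin d, ENNReal.ofReal r := by
      rw [hpr, ENNReal.ofReal_pow hr0.le]
    rw [h1]
    exact Finset.prod_le_prod' fun i _ => ENNReal.ofReal_le_ofReal (hlen i).1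
  · have h1 : ENNReal.ofReal ((2 * r) ^ d) = ∏ _i : Fin d, ENNReal.ofReal (2 * r) := by
      rw [hpr, ENNReal.ofReal_pow (by linarith : (0:ℝ) ≤ 2 * r)]
    rw [h1]
    exact Finset.prod_le_prod' fun i _ => ENNReal.ofReal_le_ofReal (hlen i).2

lemma preg_Pdist (d : ℕ) (hd : 0 < d) (τ lam γ θ : ℝ) (hlam : 0 < lam) (hγ : 0 < γ)
    (hθ : 1 < θ) : PReg d τ θ γ lam (Pdist d τ lam γ) (etaF d τ lam γ) := by
  refine ⟨isProb_Pdist d τ lam γ hγ, isRegFn_Pdist d τ lam γ hlam hγ, ?_⟩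
  intro x hx r hr
  rw [Pdist_fst d τ lam γ hγ] at hx ⊢
  have hxc : x ∈ cube d := measSupport_subset_cube d hx.2
  obtain ⟨hlow, hup⟩ := mu0_closedBall d x hxc hr.1 hr.2
  refine ⟨⟨?_, ?_⟩, ?_⟩
  · refine le_trans (ENNReal.ofReal_le_ofReal ?_) hlow
    have h1 : θ⁻¹ ≤ 1 := by
      rw [inv_le_one_iff₀]; right; exact hθ.le
    nlinarith [pow_nonneg hr.1.le d, pow_pos hr.1 d]
  · refine le_trans hup (ENNReal.ofReal_le_ofReal ?_)
    nlinarith [pow_nonneg (by linarith [hr.1] : (0:ℝ) ≤ 2 * r) d]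
  · refine ⟨fun i => x i + r, ?_, ?_⟩
    · rw [Metric.mem_closedBall]
      rw [dist_pi_le_iff hr.1.le]
      intro i
      rw [Real.dist_eq]
      simp [abs_of_nonneg hr.1.le]
    · have hxs : aconst d ≤ ∑ i, x i := by
        have := etaF_superlevel d τ lam γ hlam hγ ▸ hx.1
        exact this
      have hsum : (∑ i, (x i + r)) = (∑ i, x i) + d * r := by
        rw [Finset.sum_add_distrib, Finset.sum_const, Finset.card_univ, Fintype.card_fin,
          nsmul_eq_mul]
      have hrt : r ≤ (∑ i, (x i + r)) - aconst d := by
        rw [hsum]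
        have hd1 : (1:ℝ) ≤ (d:ℝ) := by exact_mod_cast hd
        nlinarith [hr.1]
      have := gclamp_ge_rpow γ hγ hr.1 hr.2 hrt
      simp only [mem_setOf_eq, etaF]
      nlinarith

def wconst (d : ℕ) : ℝ := 1 / (2 * d)

def slab (d : ℕ) (t : ℝ) : Set (Fin d → ℝ) :=
  {x | aconst d ≤ ∑ i, x i ∧ ∑ i, x i ≤ aconst d + t}

lemma measurable_sumcoord (d : ℕ) : Measurable fun x : Fin d → ℝ => ∑ i, x i :=
  Finset.measurable_sum Finset.univ fun i _ => measurable_pi_apply i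

lemma measurableSet_slab (d : ℕ) (t : ℝ) : MeasurableSet (slab d t) := by
  have h1 : MeasurableSet {x : Fin d → ℝ | aconst d ≤ ∑ i, x i} :=
    measurableSet_le measurable_const (measurable_sumcoord d)
  have h2 : MeasurableSet {x : Fin d → ℝ | ∑ i, x i ≤ aconst d + t} :=
    measurableSet_le (measurable_sumcoord d) measurable_const
  exact h1.inter h2

/-- The shear linear map. -/
def shear (d : ℕ) : (Fin d → ℝ) →ₗ[ℝ] (Fin d → ℝ) :=
  LinearMap.pi fun i => if (i : ℕ) = 0 then (∑ j, LinearMap.proj j) else LinearMap.proj i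

lemma shear_apply (d : ℕ) (x : Fin d → ℝ) (i : Fin d) :
    shear d x i = if (i : ℕ) = 0 then ∑ j, x j else x i := by
  rw [shear, LinearMap.pi_apply]
  by_cases h : (i : ℕ) = 0
  · simp [h]
  · simp [h]

lemma shear_det (d : ℕ) : LinearMap.det (shear d) = 1 := by
  classical
  rw [← LinearMap.det_toMatrix (Pi.basisFun ℝ (Fin d))]
  have hentry : ∀ i j, LinearMap.toMatrix (Pi.basisFun ℝ (Fin d)) (Pi.basisFun ℝ (Fin d))
      (shear d) i j = if (i : ℕ) = 0 then 1 else (if i = j then 1 else 0) := by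
    intro i j
    rw [LinearMap.toMatrix_apply]
    simp only [Pi.basisFun_repr, shear_apply, Pi.basisFun_apply]
    by_cases h : (i : ℕ) = 0
    · simp only [if_pos h]
      rw [Finset.sum_eq_single j]
      · simp
      · intro k _ hk
        simp [Pi.single_apply, hk]
      · intro hj
        exact absurd (Finset.mem_univ j) hj
    · by_cases hij : i = j <;> simp [h, hij, Pi.single_apply, eq_comm]
  have htri : Matrix.BlockTriangular
      (LinearMap.toMatrix (Pi.basisFun ℝ (Fin d)) (Pi.basisFun ℝ (Fin d)) (shear d)) id := by
    intro i j hji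
    rw [hentry]
    have hji' : j < i := hji
    have hi0 : (i : ℕ) ≠ 0 := by
      intro h
      have : (j : ℕ) < (i : ℕ) := hji'
      omega
    have hij : i ≠ j := fun h => by rw [h] at hji'; exact lt_irrefl _ hji'
    rw [if_neg hi0, if_neg hij]
  rw [Matrix.det_of_upperTriangular htri]
  rw [Finset.prod_congr rfl fun i _ => hentry i i]
  apply Finset.prod_eq_one
  intro i _
  by_cases h : (i : ℕ) = 0 <;> simp [h]

lemma wconst_pos (d : ℕ) (hd : 0 < d) : 0 < wconst d := by
  rw [wconst]
  have : (0:ℝ) < d := by exact_mod_cast hd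
  positivity

lemma wconst_le (d : ℕ) (hd : 0 < d) : wconst d ≤ 1/2 := by
  rw [wconst]
  have h1 : (1:ℝ) ≤ (d:ℝ) := by exact_mod_cast hd
  rw [div_le_div_iff₀ (by linarith) (by norm_num)]
  linarith

lemma slab_vol (d : ℕ) (hd : 0 < d) {t : ℝ} (ht0 : 0 < t) (ht : t ≤ 1/2) :
    ENNReal.ofReal (t * wconst d ^ (d - 1)) ≤ mu0 d (slab d t) := by
  classical
  set a := aconst d with ha
  set w := wconst d with hwdef
  have hw0 : 0 < w := wconst_pos d hd
  have hw2 : w ≤ 1/2 := wconst_le d hd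
  have hd1 : (1:ℝ) ≤ (d:ℝ) := by exact_mod_cast hd
  set i0 : Fin d := ⟨0, hd⟩ with hi0
  have hvali0 : ∀ i : Fin d, (i : ℕ) = 0 ↔ i = i0 := by
    intro i
    constructor
    · intro h; exact Fin.ext h
    · intro h; rw [h]
  set Q : Set (Fin d → ℝ) :=
    univ.pi fun i => if (i:ℕ) = 0 then Icc a (a+t) else Icc (1/4) (1/4+w) with hQ
  have hcarde : (Finset.univ.erase i0).card = d - 1 := by
    rw [Finset.card_erase_of_mem (Finset.mem_univ i0), Finset.card_univ, Fintype.card_fin]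
  have hcaste : (((d - 1 : ℕ) : ℝ)) = (d:ℝ) - 1 := by
    rw [Nat.cast_sub hd]
    simp
  have hQvol : volume Q = ENNReal.ofReal (t * w ^ (d-1)) := by
    rw [hQ, volume_pi_pi]
    have hterm : ∀ i : Fin d, volume (if (i:ℕ) = 0 then Icc a (a+t) else Icc (1/4) (1/4+w))
        = if (i:ℕ) = 0 then ENNReal.ofReal t else ENNReal.ofReal w := by
      intro i
      by_cases h : (i:ℕ) = 0 <;> simp [h, Real.volume_Icc]
    rw [Finset.prod_congr rfl fun i _ => hterm i]
    rw [← Finset.mul_prod_erase Finset.univ _ (Finset.mem_univ i0)]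
    have h0 : ((i0 : Fin d) : ℕ) = 0 := rfl
    rw [if_pos h0]
    have hrest : ∀ i ∈ Finset.univ.erase i0,
        (if ((i : Fin d):ℕ) = 0 then ENNReal.ofReal t else ENNReal.ofReal w)
        = ENNReal.ofReal w := by
      intro i hi
      have : i ≠ i0 := (Finset.mem_erase.mp hi).1
      rw [if_neg (fun hc => this ((hvali0 i).mp hc))]
    rw [Finset.prod_congr rfl hrest, Finset.prod_const, hcarde,
      ← ENNReal.ofReal_pow hw0.le, ← ENNReal.ofReal_mul ht0.le]
  have hdet : LinearMap.det (shear d) ≠ 0 := by rw [shear_det]; norm_num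
  have hpre : volume (shear d ⁻¹' Q) = ENNReal.ofReal (t * w ^ (d-1)) := by
    rw [Measure.addHaar_preimage_linearMap volume hdet Q, shear_det, hQvol]
    norm_num
  have hsub : shear d ⁻¹' Q ⊆ slab d t ∩ cube d := by
    intro x hx
    rw [Set.mem_preimage, hQ, Set.mem_pi] at hx
    have hx0 : (∑ j, x j) ∈ Icc a (a+t) := by
      have := hx i0 (mem_univ i0)
      rw [if_pos (by rfl : ((i0 : Fin d):ℕ) = 0)] at this
      rwa [shear_apply, if_pos (by rfl : ((i0 : Fin d):ℕ) = 0)] at this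
    have hxi : ∀ i : Fin d, i ≠ i0 → x i ∈ Icc (1/4 : ℝ) (1/4+w) := by
      intro i hi
      have hv : (i:ℕ) ≠ 0 := fun hc => hi ((hvali0 i).mp hc)
      have := hx i (mem_univ i)
      rw [if_neg hv] at this
      rwa [shear_apply, if_neg hv] at this
    have hsplit : x i0 + ∑ i ∈ Finset.univ.erase i0, x i = ∑ i, x i :=
      Finset.add_sum_erase Finset.univ x (Finset.mem_univ i0)
    have hTlow : ((d:ℝ) - 1) * (1/4) ≤ ∑ i ∈ Finset.univ.erase i0, x i := by
      have h1 : ∑ _i ∈ Finset.univ.erase i0, (1/4:ℝ) ≤ ∑ i ∈ Finset.univ.erase i0, x i :=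
        Finset.sum_le_sum fun i hi => (hxi i (Finset.mem_erase.mp hi).1).1
      rwa [Finset.sum_const, hcarde, nsmul_eq_mul, hcaste] at h1
    have hThigh : ∑ i ∈ Finset.univ.erase i0, x i ≤ ((d:ℝ) - 1) * (1/4+w) := by
      have h1 : ∑ i ∈ Finset.univ.erase i0, x i ≤ ∑ _i ∈ Finset.univ.erase i0, (1/4+w:ℝ) :=
        Finset.sum_le_sum fun i hi => (hxi i (Finset.mem_erase.mp hi).1).2
      rwa [Finset.sum_const, hcarde, nsmul_eq_mul, hcaste] at h1
    have haval : a = ((d:ℝ) - 1) * (1/4+w) := by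
      rw [ha, aconst, hwdef, wconst]
    constructor
    · exact ⟨hx0.1, hx0.2⟩
    · intro i _
      by_cases hii : i = i0
      · rw [hii]
        have hxi0 : x i0 = (∑ i, x i) - ∑ i ∈ Finset.univ.erase i0, x i := by linarith
        constructor
        · rw [hxi0]
          have := hx0.1
          linarith [hThigh, haval ▸ this]
        · rw [hxi0]
          have h2 := hx0.2
          have hwd : ((d:ℝ) - 1) * w ≤ 1/2 := by
            rw [hwdef, wconst, mul_one_div, div_le_div_iff₀ (by linarith) (by norm_num)]
            nlinarith
          nlinarith [hTlow]
      · have := hxi i hii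
        constructor
        · linarith [this.1]
        · linarith [this.2]
  calc ENNReal.ofReal (t * w ^ (d-1)) = volume (shear d ⁻¹' Q) := hpre.symm
    _ ≤ volume (slab d t ∩ cube d) := measure_mono hsub
    _ = mu0 d (slab d t) := by
      rw [mu0, Measure.restrict_apply (measurableSet_slab d t)]

def tconst (d m : ℕ) : ℝ := (1/2) * (m:ℝ) ^ (-(1/(d:ℝ)))

lemma tconst_pos (d m : ℕ) (hm : 1 ≤ m) : 0 < tconst d m := by
  rw [tconst]
  have hm0 : (0:ℝ) < m := by exact_mod_cast hm
  positivity

lemma tconst_le (d m : ℕ) (hm : 1 ≤ m) : tconst d m ≤ 1/2 := by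
  rw [tconst]
  have hm1 : (1:ℝ) ≤ (m:ℝ) := by exact_mod_cast hm
  have h1 : (m:ℝ) ^ (-(1/(d:ℝ))) ≤ 1 := by
    apply Real.rpow_le_one_of_one_le_of_nonpos hm1
    have : (0:ℝ) ≤ 1/(d:ℝ) := by positivity
    linarith
  nlinarith [Real.rpow_nonneg (by positivity : (0:ℝ) ≤ (m:ℝ)) (-(1/(d:ℝ)))]

lemma tconst_pow (d m : ℕ) (hd : 0 < d) (hm : 1 ≤ m) :
    (m:ℝ) * tconst d m ^ d = (1/2)^d := by
  have hm0 : (0:ℝ) < m := by exact_mod_cast hm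
  have hd0 : (d:ℝ) ≠ 0 := by positivity
  rw [tconst, mul_pow]
  have h1 : ((m:ℝ) ^ (-(1/(d:ℝ)))) ^ d = (m:ℝ)⁻¹ := by
    rw [← Real.rpow_natCast ((m:ℝ) ^ (-(1/(d:ℝ)))) d, ← Real.rpow_mul hm0.le]
    have : (-(1/(d:ℝ))) * (d:ℝ) = -1 := by field_simp
    rw [this, Real.rpow_neg_one]
  rw [h1]
  field_simp

lemma pi_eval_mem (d n : ℕ) (P : Measure ((Fin d → ℝ) × ℝ)) [IsProbabilityMeasure P]
    (i : Fin n) (B : Set ((Fin d → ℝ) × ℝ)) (hB : MeasurableSet B) :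
    (Measure.pi fun _ : Fin n => P) {ω | ω i ∈ B} = P B := by
  classical
  have hset : {ω : Fin n → (Fin d → ℝ) × ℝ | ω i ∈ B}
      = Set.pi univ (Function.update (fun _ : Fin n => (univ : Set ((Fin d → ℝ) × ℝ))) i B) := by
    ext ω
    simp only [Set.mem_pi, mem_univ, forall_true_left, mem_setOf_eq]
    constructor
    · intro h j
      rcases eq_or_ne j i with hj | hj
      · rw [hj, Function.update_self]; exact h
      · rw [Function.update_of_ne hj]; exact mem_univ _
    · intro h
      have := h i
      rwa [Function.update_self] at this
  rw [hset, Measure.pi_pi]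
  rw [Finset.prod_eq_single i]
  · rw [Function.update_self]
  · intro j _ hj
    rw [Function.update_of_ne hj, measure_univ]
  · intro h
    exact absurd (Finset.mem_univ i) h

end Prop14

open Prop14
/-- Proposition A.5: there exists `c ∈ (0,1)`, depending only on `d`, such that the worst-case
(over `P' = P_{Mon,d}(σ) ∩ P_{Reg,d}(τ,θ,γ,λ)`) best-case (over valid selection sets that are
a.s. upper hulls of subsets of the first `m` covariate points) expected regret is at least
`c m^{-1/d}`. -/
theorem statement14 (d : ℕ) (hd : 0 < d) :
    ∃ c : ℝ, c ∈ Set.Ioo (0 : ℝ) 1 ∧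
      ∀ (α : ℝ), α ∈ Set.Ioc (0 : ℝ) (1 / 4) →
      ∀ (n : ℕ), 0 < n → ∀ (m : ℕ), 1 ≤ m → m ≤ n →
      ∀ (τ σ γ lam θ : ℝ), 0 < σ → 0 < γ → 0 < lam → 1 < θ →
        ENNReal.ofReal (c * ((m : ℝ)) ^ (-(1 / (d : ℝ)))) ≤
          ⨆ (P : Measure ((Fin d → ℝ) × ℝ)) (η : (Fin d → ℝ) → ℝ)
              (_ : PMon d σ P η ∧ PReg d τ θ γ lam P η),
            ⨅ (A : (Fin n → (Fin d → ℝ) × ℝ) → Set (Fin d → ℝ))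
                (_ : SelValid d n τ α (fun P' η' => PMon d σ P' η' ∧ PReg d τ θ γ lam P' η') A ∧
                  SelUpperHull d n m
                    (fun P' η' => PMon d σ P' η' ∧ PReg d τ θ γ lam P' η') A),
              ∫⁻ ω, (P.map Prod.fst) ({x | τ ≤ η x} \ A ω)
                ∂(Measure.pi fun _ : Fin n => P) := by
    classical
  have hw0 : 0 < wconst d := wconst_pos d hd
  have hw2 : wconst d ≤ 1/2 := wconst_le d hd
  refine ⟨wconst d ^ (d-1) / 8, ⟨by positivity, ?_⟩, ?_⟩
  · have h1 : wconst d ^ (d-1) ≤ 1 := pow_le_one₀ hw0.le (by linarith)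
    linarith
  intro α hα n hn m hm1 hmn τ σ γ lam θ hσ hγ hlam hθ
  set P := Pdist d τ lam γ with hPdef
  set η := etaF d τ lam γ with hηdef
  haveI : IsProbabilityMeasure P := isProb_Pdist d τ lam γ hγ
  have hmem : PMon d σ P η ∧ PReg d τ θ γ lam P η :=
    ⟨pmon_Pdist d σ τ lam γ hσ hlam hγ, preg_Pdist d hd τ lam γ θ hlam hγ hθ⟩
  set S : Set (Fin d → ℝ) := {x | aconst d ≤ ∑ i, x i} with hSdef
  have hSeq : {x | τ ≤ η x} = S := etaF_superlevel d τ lam γ hlam hγ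
  have hSmeas : MeasurableSet S := measurableSet_le measurable_const (measurable_sumcoord d)
  set t := tconst d m with htdef
  have ht0 : 0 < t := tconst_pos d m hm1
  have ht12 : t ≤ 1/2 := tconst_le d m hm1
  set V := mu0 d (slab d t) with hVdef
  refine le_iSup_of_le P (le_iSup_of_le η (le_iSup_of_le hmem ?_))
  refine le_iInf fun A => le_iInf fun hA => ?_
  set ν := (Measure.pi fun _ : Fin n => P) with hνdef
  -- rewrite the integrand
  have hint : (∫⁻ ω, (P.map Prod.fst) ({x | τ ≤ η x} \ A ω) ∂ν)
      = ∫⁻ ω, mu0 d (S \ A ω) ∂ν := by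
    refine lintegral_congr fun ω => ?_
    rw [hPdef, Pdist_fst d τ lam γ hγ, hSeq]
  rw [hint]
  set F : (Fin n → (Fin d → ℝ) × ℝ) → ℝ≥0∞ := fun ω => mu0 d (S \ A ω) with hFdef
  set C : (Fin n → (Fin d → ℝ) × ℝ) → Set (Fin d → ℝ) :=
    fun ω => {x | ∃ i : Fin n, (i:ℕ) < m ∧ (ω i).1 ∈ S ∧ (ω i).1 ≤ x} with hCdef
  set K : (Fin n → (Fin d → ℝ) × ℝ) → ℝ≥0∞ := fun ω => mu0 d (slab d t ∩ C ω) with hKdef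
  have hGmeas := hA.1.1
  have meas_zi : ∀ i : Fin n, Measurable fun ω : Fin n → (Fin d → ℝ) × ℝ => (ω i).1 :=
    fun i => measurable_fst.comp (measurable_pi_apply i)
  -- measurability of F
  have hFmeas : Measurable F := by
    have hTm : MeasurableSet {q : (Fin n → (Fin d → ℝ) × ℝ) × (Fin d → ℝ) | q.2 ∈ S \ A q.1} := by
      have h1 : MeasurableSet {q : (Fin n → (Fin d → ℝ) × ℝ) × (Fin d → ℝ) | q.2 ∈ S} :=
        hSmeas.preimage measurable_snd
      exact h1.diff hGmeas
    exact measurable_measure_prodMk_left hTm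
  -- measurability of K
  have hKmeas : Measurable K := by
    have hTm : MeasurableSet
        {q : (Fin n → (Fin d → ℝ) × ℝ) × (Fin d → ℝ) | q.2 ∈ slab d t ∩ C q.1} := by
      have h1 : MeasurableSet {q : (Fin n → (Fin d → ℝ) × ℝ) × (Fin d → ℝ) | q.2 ∈ slab d t} :=
        (measurableSet_slab d t).preimage measurable_snd
      have h2 : MeasurableSet {q : (Fin n → (Fin d → ℝ) × ℝ) × (Fin d → ℝ) | q.2 ∈ C q.1} := by
        have heq : {q : (Fin n → (Fin d → ℝ) × ℝ) × (Fin d → ℝ) | q.2 ∈ C q.1}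
            = ⋃ i : Fin n, ({q : (Fin n → (Fin d → ℝ) × ℝ) × (Fin d → ℝ) |
                (i:ℕ) < m ∧ (q.1 i).1 ∈ S ∧ (q.1 i).1 ≤ q.2}) := by
          ext q
          simp [hCdef, Set.mem_iUnion]
        rw [heq]
        refine MeasurableSet.iUnion fun i => ?_
        have hzi : Measurable fun q : (Fin n → (Fin d → ℝ) × ℝ) × (Fin d → ℝ) => (q.1 i).1 :=
          (meas_zi i).comp measurable_fst
        have hm1' : MeasurableSet {q : (Fin n → (Fin d → ℝ) × ℝ) × (Fin d → ℝ) | (i:ℕ) < m} :=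
          MeasurableSet.const _
        have hm2 : MeasurableSet {q : (Fin n → (Fin d → ℝ) × ℝ) × (Fin d → ℝ) | (q.1 i).1 ∈ S} :=
          hSmeas.preimage hzi
        have hm3 : MeasurableSet {q : (Fin n → (Fin d → ℝ) × ℝ) × (Fin d → ℝ) |
            (q.1 i).1 ≤ q.2} := by
          have heq2 : {q : (Fin n → (Fin d → ℝ) × ℝ) × (Fin d → ℝ) | (q.1 i).1 ≤ q.2}
              = ⋂ j : Fin d, {q : (Fin n → (Fin d → ℝ) × ℝ) × (Fin d → ℝ) |
                  (q.1 i).1 j ≤ q.2 j} := by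
            ext q
            simp [Pi.le_def, Set.mem_iInter]
          rw [heq2]
          exact MeasurableSet.iInter fun j =>
            measurableSet_le ((measurable_pi_apply j).comp hzi)
              ((measurable_pi_apply j).comp measurable_snd)
        exact hm1'.inter (hm2.inter hm3)
      exact h1.inter h2
    exact measurable_measure_prodMk_left hTm
  -- type I error bound
  have hAe : ENNReal.ofReal (1 - α) ≤ ν {ω | A ω ⊆ S} := by
    have := hA.1.2 P η hmem
    rwa [hSeq] at this
  have hQae := hA.2 P η hmem
  -- pointwise claim
  have hpoint : ∀ ω, A ω ⊆ S →
      (∃ J : Finset (Fin n), (∀ i ∈ J, (i : ℕ) < m) ∧ A ω = {x | ∃ i ∈ J, (ω i).1 ≤ x}) →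
      V ≤ F ω + K ω := by
    intro ω hsub hQ
    obtain ⟨J, hJm, hJA⟩ := hQ
    have hslabS : slab d t ⊆ S := fun x hx => hx.1
    have hAC : A ω ⊆ C ω := by
      intro x hx
      have hx' := hx
      rw [hJA] at hx'
      obtain ⟨i, hiJ, hle⟩ := hx'
      have hzi : (ω i).1 ∈ A ω := by
        rw [hJA]
        exact ⟨i, hiJ, le_refl _⟩
      exact ⟨i, hJm i hiJ, hsub hzi, hle⟩
    have hcover : slab d t ⊆ (S \ A ω) ∪ (slab d t ∩ C ω) := by
      intro x hx
      by_cases hxC : x ∈ C ω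
      · exact Or.inr ⟨hx, hxC⟩
      · exact Or.inl ⟨hslabS hx, fun hxA => hxC (hAC hxA)⟩
    calc V ≤ mu0 d ((S \ A ω) ∪ (slab d t ∩ C ω)) := measure_mono hcover
      _ ≤ F ω + K ω := measure_union_le _ _
  -- measure of the good event
  have hEbig : ENNReal.ofReal (3/4 : ℝ) ≤ ν {ω | V ≤ F ω + K ω} := by
    have h0 : ν {ω | ¬ ∃ J : Finset (Fin n), (∀ i ∈ J, (i : ℕ) < m) ∧
        A ω = {x | ∃ i ∈ J, (ω i).1 ≤ x}} = 0 := ae_iff.mp hQae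
    calc ENNReal.ofReal (3/4 : ℝ) ≤ ENNReal.ofReal (1 - α) :=
          ENNReal.ofReal_le_ofReal (by linarith [hα.2])
      _ ≤ ν {ω | A ω ⊆ S} := hAe
      _ ≤ ν ({ω | V ≤ F ω + K ω} ∪ {ω | ¬ ∃ J : Finset (Fin n), (∀ i ∈ J, (i : ℕ) < m) ∧
          A ω = {x | ∃ i ∈ J, (ω i).1 ≤ x}}) := by
          refine measure_mono fun ω hω => ?_
          by_cases hq : ∃ J : Finset (Fin n), (∀ i ∈ J, (i : ℕ) < m) ∧
              A ω = {x | ∃ i ∈ J, (ω i).1 ≤ x}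
          · exact Or.inl (hpoint ω hω hq)
          · exact Or.inr hq
      _ ≤ ν {ω | V ≤ F ω + K ω} + ν _ := measure_union_le _ _
      _ = ν {ω | V ≤ F ω + K ω} := by rw [h0, add_zero]
  -- Markov-type bound
  have hmark : V * ENNReal.ofReal (3/4 : ℝ) ≤ (∫⁻ ω, F ω ∂ν) + ∫⁻ ω, K ω ∂ν := by
    have h1 := mul_meas_ge_le_lintegral₀ (μ := ν)
      ((hFmeas.add hKmeas).aemeasurable) V
    calc V * ENNReal.ofReal (3/4 : ℝ) ≤ V * ν {ω | V ≤ F ω + K ω} :=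
          mul_le_mul_right hEbig V
      _ ≤ ∫⁻ ω, F ω + K ω ∂ν := h1
      _ = (∫⁻ ω, F ω ∂ν) + ∫⁻ ω, K ω ∂ν := lintegral_add_left hFmeas K
  -- bound on the K integral
  have hKint : (∫⁻ ω, K ω ∂ν) ≤ ENNReal.ofReal (1/2 : ℝ) * V := by
    set hindset : Fin n → Set (Fin n → (Fin d → ℝ) × ℝ) :=
      fun i => {ω | (i:ℕ) < m ∧ (ω i).1 ∈ slab d t} with hhindset
    have hindmeas : ∀ i, MeasurableSet (hindset i) := by
      intro i
      by_cases him : (i:ℕ) < m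
      · have : hindset i = (fun ω : Fin n → (Fin d → ℝ) × ℝ => (ω i).1) ⁻¹' slab d t := by
          ext ω
          simp [hhindset, him]
        rw [this]
        exact (measurableSet_slab d t).preimage (meas_zi i)
      · have : hindset i = ∅ := by
          ext ω
          simp [hhindset, him]
        rw [this]
        exact MeasurableSet.empty
    have hptwise : ∀ ω, K ω ≤ ∑ i : Fin n,
        (hindset i).indicator (fun _ => ENNReal.ofReal (t^d)) ω := by
      intro ω
      have hsplit : slab d t ∩ C ω ⊆ ⋃ i : Fin n,
          (slab d t ∩ {x | (i:ℕ) < m ∧ (ω i).1 ∈ S ∧ (ω i).1 ≤ x}) := by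
        rintro x ⟨hxs, i, him, hiS, hile⟩
        exact Set.mem_iUnion.mpr ⟨i, hxs, him, hiS, hile⟩
      have hterm : ∀ i : Fin n,
          mu0 d (slab d t ∩ {x | (i:ℕ) < m ∧ (ω i).1 ∈ S ∧ (ω i).1 ≤ x})
          ≤ (hindset i).indicator (fun _ => ENNReal.ofReal (t^d)) ω := by
        intro i
        by_cases him : (i:ℕ) < m
        · by_cases hiS : (ω i).1 ∈ S
          · by_cases hsl : (∑ j, (ω i).1 j) ≤ aconst d + t
            · have hzslab : (ω i).1 ∈ slab d t := ⟨hiS, hsl⟩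
              rw [Set.indicator_of_mem (show ω ∈ hindset i from ⟨him, hzslab⟩)]
              have hsubbox : slab d t ∩ {x | (i:ℕ) < m ∧ (ω i).1 ∈ S ∧ (ω i).1 ≤ x}
                  ⊆ univ.pi fun j => Icc ((ω i).1 j) ((ω i).1 j + t) := by
                rintro x ⟨hxs, _, _, hle⟩
                intro j _
                refine ⟨hle j, ?_⟩
                have hsum : ∑ k, (x k - (ω i).1 k) ≤ t := by
                  rw [Finset.sum_sub_distrib]
                  have h1 := hxs.2
                  have h2 := hiS
                  rw [hSdef] at h2
                  simp only [mem_setOf_eq] at h2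
                  linarith
                have hsingle : x j - (ω i).1 j ≤ ∑ k, (x k - (ω i).1 k) :=
                  Finset.single_le_sum (fun k _ => sub_nonneg.mpr (hle k)) (Finset.mem_univ j)
                linarith
              calc mu0 d (slab d t ∩ {x | (i:ℕ) < m ∧ (ω i).1 ∈ S ∧ (ω i).1 ≤ x})
                  ≤ volume ((slab d t ∩ {x | (i:ℕ) < m ∧ (ω i).1 ∈ S ∧ (ω i).1 ≤ x}) ∩ cube d) := by
                    rw [mu0, Measure.restrict_apply' (measurableSet_cube d)]
                _ ≤ volume (univ.pi fun j => Icc ((ω i).1 j) ((ω i).1 j + t)) :=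
                    measure_mono (le_trans Set.inter_subset_left hsubbox)
                _ = ENNReal.ofReal (t^d) := by
                    rw [volume_pi_pi]
                    have : ∀ j : Fin d, volume (Icc ((ω i).1 j) ((ω i).1 j + t))
                        = ENNReal.ofReal t := by
                      intro j
                      rw [Real.volume_Icc]
                      congr 1
                      ring
                    rw [Finset.prod_congr rfl fun j _ => this j, Finset.prod_const,
                      Finset.card_univ, Fintype.card_fin, ← ENNReal.ofReal_pow ht0.le]
            · have hempty : slab d t ∩ {x | (i:ℕ) < m ∧ (ω i).1 ∈ S ∧ (ω i).1 ≤ x} = ∅ := by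
                ext x
                simp only [Set.mem_inter_iff, mem_setOf_eq, Set.mem_empty_iff_false, iff_false]
                rintro ⟨hxs, _, _, hle⟩
                have hsum : ∑ k, (ω i).1 k ≤ ∑ k, x k := Finset.sum_le_sum fun k _ => hle k
                have := hxs.2
                exact hsl (by linarith)
              rw [hempty, measure_empty]
              exact zero_le
          · have hempty : slab d t ∩ {x | (i:ℕ) < m ∧ (ω i).1 ∈ S ∧ (ω i).1 ≤ x} = ∅ := by
              ext x
              simp only [Set.mem_inter_iff, mem_setOf_eq, Set.mem_empty_iff_false, iff_false]
              rintro ⟨_, _, hS', _⟩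
              exact hiS hS'
            rw [hempty, measure_empty]
            exact zero_le
        · have hempty : slab d t ∩ {x | (i:ℕ) < m ∧ (ω i).1 ∈ S ∧ (ω i).1 ≤ x} = ∅ := by
            ext x
            simp only [Set.mem_inter_iff, mem_setOf_eq, Set.mem_empty_iff_false, iff_false]
            rintro ⟨_, him', _, _⟩
            exact him him'
          rw [hempty, measure_empty]
          exact zero_le
      calc K ω ≤ mu0 d (⋃ i : Fin n,
            (slab d t ∩ {x | (i:ℕ) < m ∧ (ω i).1 ∈ S ∧ (ω i).1 ≤ x})) := measure_mono hsplit
        _ ≤ ∑' i : Fin n, mu0 d (slab d t ∩ {x | (i:ℕ) < m ∧ (ω i).1 ∈ S ∧ (ω i).1 ≤ x}) :=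
            measure_iUnion_le _
        _ = ∑ i : Fin n, mu0 d (slab d t ∩ {x | (i:ℕ) < m ∧ (ω i).1 ∈ S ∧ (ω i).1 ≤ x}) :=
            tsum_fintype _
        _ ≤ _ := Finset.sum_le_sum fun i _ => hterm i
    have hintone : ∀ i : Fin n, (∫⁻ ω, (hindset i).indicator
        (fun _ => ENNReal.ofReal (t^d)) ω ∂ν)
        = if (i:ℕ) < m then ENNReal.ofReal (t^d) * V else 0 := by
      intro i
      rw [lintegral_indicator_const (hindmeas i)]
      by_cases him : (i:ℕ) < m
      · rw [if_pos him]
        congr 1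
        have hseteq : hindset i = {ω : Fin n → (Fin d → ℝ) × ℝ |
            ω i ∈ (Prod.fst ⁻¹' slab d t : Set ((Fin d → ℝ) × ℝ))} := by
          ext ω
          simp [hhindset, him]
        rw [hseteq, hνdef, pi_eval_mem d n P i _ ((measurableSet_slab d t).preimage measurable_fst)]
        rw [← Measure.map_apply measurable_fst (measurableSet_slab d t), hPdef,
          Pdist_fst d τ lam γ hγ]
      · rw [if_neg him]
        have hseteq : hindset i = ∅ := by
          ext ω
          simp [hhindset, him]
        rw [hseteq, measure_empty, mul_zero]
    have hcard : ((Finset.univ.filter (fun i : Fin n => (i:ℕ) < m)).card : ℝ≥0∞) ≤ (m : ℝ≥0∞) := by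
      have h1 : (Finset.univ.filter (fun i : Fin n => (i:ℕ) < m)).card
          ≤ (Finset.range m).card := by
        apply Finset.card_le_card_of_injOn (fun i : Fin n => (i:ℕ))
        · intro i hi
          exact Finset.mem_range.mpr (Finset.mem_filter.mp hi).2
        · intro a _ b _ h
          exact Fin.val_injective h
      rw [Finset.card_range] at h1
      exact_mod_cast h1
    calc (∫⁻ ω, K ω ∂ν) ≤ ∫⁻ ω, (∑ i : Fin n, (hindset i).indicator
          (fun _ => ENNReal.ofReal (t^d)) ω) ∂ν := lintegral_mono hptwise
      _ = ∑ i : Fin n, ∫⁻ ω, (hindset i).indicator (fun _ => ENNReal.ofReal (t^d)) ω ∂ν :=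
          lintegral_finset_sum _ fun i _ =>
            (measurable_const.indicator (hindmeas i))
      _ = ∑ i : Fin n, if (i:ℕ) < m then ENNReal.ofReal (t^d) * V else 0 :=
          Finset.sum_congr rfl fun i _ => hintone i
      _ = ((Finset.univ.filter (fun i : Fin n => (i:ℕ) < m)).card : ℝ≥0∞)
            * (ENNReal.ofReal (t^d) * V) := by
          rw [← Finset.sum_filter, Finset.sum_const, nsmul_eq_mul]
      _ ≤ (m : ℝ≥0∞) * (ENNReal.ofReal (t^d) * V) := mul_le_mul_left hcard _
      _ = ENNReal.ofReal ((m:ℝ) * t^d) * V := by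
          rw [← mul_assoc, ← ENNReal.ofReal_natCast m, ← ENNReal.ofReal_mul (by positivity)]
      _ ≤ ENNReal.ofReal (1/2 : ℝ) * V := by
          refine mul_le_mul_left (ENNReal.ofReal_le_ofReal ?_) V
          rw [htdef, tconst_pow d m hd hm1]
          calc ((1:ℝ)/2)^d ≤ (1/2)^1 :=
                pow_le_pow_of_le_one (by norm_num) (by norm_num) hd
            _ = 1/2 := pow_one _
  -- conclude
  have hVne : V ≠ ⊤ := (measure_lt_top (mu0 d) _).ne
  have hhalfne : V * ENNReal.ofReal (1/2 : ℝ) ≠ ⊤ := ENNReal.mul_ne_top hVne ENNReal.ofReal_ne_top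
  have hstep : V * ENNReal.ofReal (1/4 : ℝ) ≤ ∫⁻ ω, F ω ∂ν := by
    have hsplit34 : V * ENNReal.ofReal (3/4 : ℝ)
        = V * ENNReal.ofReal (1/4 : ℝ) + V * ENNReal.ofReal (1/2 : ℝ) := by
      rw [← mul_add, ← ENNReal.ofReal_add (by norm_num) (by norm_num)]
      norm_num
    have h2 : V * ENNReal.ofReal (1/4 : ℝ) + V * ENNReal.ofReal (1/2 : ℝ)
        ≤ (∫⁻ ω, F ω ∂ν) + V * ENNReal.ofReal (1/2 : ℝ) := by
      rw [← hsplit34]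
      calc V * ENNReal.ofReal (3/4 : ℝ) ≤ (∫⁻ ω, F ω ∂ν) + ∫⁻ ω, K ω ∂ν := hmark
        _ ≤ (∫⁻ ω, F ω ∂ν) + ENNReal.ofReal (1/2 : ℝ) * V := add_le_add_right hKint _
        _ = (∫⁻ ω, F ω ∂ν) + V * ENNReal.ofReal (1/2 : ℝ) := by rw [mul_comm]
    exact (ENNReal.add_le_add_iff_right hhalfne).mp h2
  have hv : ENNReal.ofReal (t * wconst d ^ (d-1)) ≤ V := slab_vol d hd ht0 ht12
  calc ENNReal.ofReal (wconst d ^ (d-1) / 8 * ((m : ℝ)) ^ (-(1 / (d : ℝ))))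
      = ENNReal.ofReal (t * wconst d ^ (d-1)) * ENNReal.ofReal (1/4 : ℝ) := by
        rw [← ENNReal.ofReal_mul (by positivity)]
        congr 1
        rw [htdef, tconst]
        ring
    _ ≤ V * ENNReal.ofReal (1/4 : ℝ) := mul_le_mul_left hv _
    _ ≤ ∫⁻ ω, F ω ∂ν := hstep
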